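/- There exists a constant C > 0 such that for every real α ≥ 1, |∫₀^{π/2} exp(2πiα·sin²θ)·sinθ dθ − ((1 − i)/4)·exp(2πiα)·α^{−1/2}| ≤ C/α. -/

import Mathlib

set_option maxHeartbeats 1000000

open Real Complex MeasureTheory Set Filter Topology

lemma tail_bound {b : ℂ} (hb : 0 < b.re) :
    ‖∫ u in Set.Ioi (1:ℝ), Complex.exp (-b * (u:ℂ)^2)‖ ≤ 1 / ‖b‖ := by
  have hb0 : b ≠ 0 := fun h => by simp [h] at hb
  have hbn : (0:ℝ) < ‖b‖ := norm_pos_iff.mpr hb0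
  set H : ℝ → ℂ := fun u => Complex.exp (-b*(u:ℂ)^2) * (-(1/(2*b))) * ((u:ℂ))⁻¹ with hH
  set φ : ℝ → ℂ := fun u => Complex.exp (-b*(u:ℂ)^2) + Complex.exp (-b*(u:ℂ)^2) / (2*b*(u:ℂ)^2) with hφ
  have hexp_le : ∀ u : ℝ, ‖Complex.exp (-b*(u:ℂ)^2)‖ ≤ 1 := by
    intro u
    rw [Complex.norm_exp]
    have : (-b*(u:ℂ)^2).re = -(b.re * u^2) := by
      simp [Complex.mul_re, ← Complex.ofReal_pow]
    rw [this]
    exact Real.exp_le_one_iff.mpr (by nlinarith [sq_nonneg u])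
  have hderiv : ∀ u ∈ Set.Ici (1:ℝ), HasDerivAt H (φ u) u := by
    intro u hu
    have hu0 : (u:ℂ) ≠ 0 := by
      simp only [ne_eq, Complex.ofReal_eq_zero]; intro h; rw [h] at hu; norm_num at hu
    have h1 : HasDerivAt (fun w : ℂ => -b*w^2) (-b*(2*(u:ℂ))) (u:ℂ) := by
      simpa using (hasDerivAt_pow 2 (u:ℂ)).const_mul (-b)
    have h3 : HasDerivAt (fun w : ℂ => w⁻¹) (-((u:ℂ)^2)⁻¹) (u:ℂ) := hasDerivAt_inv hu0
    have h4 := ((h1.cexp.mul_const (-(1/(2*b)))).mul h3).comp_ofReal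
    have hd : Complex.exp (-b*(u:ℂ)^2) * (-b * (2*(u:ℂ))) * (-(1/(2*b))) * ((u:ℂ))⁻¹
        + Complex.exp (-b*(u:ℂ)^2) * (-(1/(2*b))) * (-((u:ℂ)^2)⁻¹) = φ u := by
      rw [hφ]
      show _ = Complex.exp (-b*(u:ℂ)^2) + Complex.exp (-b*(u:ℂ)^2) / (2*b*(u:ℂ)^2)
      generalize Complex.exp (-b*(u:ℂ)^2) = E
      field_simp
    rw [← hd]
    convert h4 using 1
    rfl
  have i1 : IntegrableOn (fun u : ℝ => Complex.exp (-b*(u:ℂ)^2)) (Set.Ioi 1) :=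
    (integrable_cexp_neg_mul_sq hb).integrableOn
  have hgint : IntegrableOn (fun u : ℝ => (2*‖b‖)⁻¹ * u ^ (-2:ℝ)) (Set.Ioi 1) :=
    (integrableOn_Ioi_rpow_of_lt (by norm_num) one_pos).const_mul _
  have hbound : ∀ u : ℝ, u ∈ Set.Ioi (1:ℝ) →
      ‖Complex.exp (-b*(u:ℂ)^2) / (2*b*(u:ℂ)^2)‖ ≤ (2*‖b‖)⁻¹ * u ^ (-2:ℝ) := by
    intro u hu
    have hu1 : (1:ℝ) < u := hu
    have hupos : (0:ℝ) < u := by linarith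
    rw [norm_div]
    have hden : ‖2*b*(u:ℂ)^2‖ = 2*‖b‖*u^2 := by
      simp [norm_mul, ← Complex.ofReal_pow, abs_of_pos hupos, _root_.sq_abs]
    rw [hden, Real.rpow_neg hupos.le]
    rw [show ((2:ℝ)) = ((2:ℕ):ℝ) by norm_num, Real.rpow_natCast]
    rw [div_le_iff₀ (by positivity)]
    have hpos : (0:ℝ) < 2*‖b‖*u^2 := by positivity
    have hone : (2*‖b‖)⁻¹ * (u^2)⁻¹ * (2*‖b‖*u^2) = 1 := by
      rw [← mul_inv, inv_mul_cancel₀ hpos.ne']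
    calc ‖Complex.exp (-b*(u:ℂ)^2)‖ ≤ 1 := hexp_le u
      _ ≤ (2*‖b‖)⁻¹ * (u^2)⁻¹ * (2*‖b‖*u^2) := le_of_eq hone.symm
  have i2 : IntegrableOn (fun u : ℝ => Complex.exp (-b*(u:ℂ)^2) / (2*b*(u:ℂ)^2)) (Set.Ioi 1) := by
    apply Integrable.mono' hgint
    · apply ContinuousOn.aestronglyMeasurable _ measurableSet_Ioi
      apply ContinuousOn.div
      · exact (Complex.continuous_exp.comp (by continuity)).continuousOn
      · exact (by continuity : Continuous fun u : ℝ => 2*b*(u:ℂ)^2).continuousOn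
      · intro u hu
        have : (u:ℂ) ≠ 0 := by
          simp only [ne_eq, Complex.ofReal_eq_zero]
          intro h; rw [h] at hu; norm_num at hu
        simp [hb0, this]
    · filter_upwards [ae_restrict_mem measurableSet_Ioi] with u hu
      exact hbound u hu
  have htends : Tendsto H atTop (𝓝 0) := by
    apply squeeze_zero_norm' (a := fun u : ℝ => (2*‖b‖)⁻¹ * u⁻¹)
    · filter_upwards [eventually_ge_atTop (1:ℝ)] with u hu
      have hupos : (0:ℝ) < u := by linarith
      have hc : ‖-(1/(2*b))‖ = (2*‖b‖)⁻¹ := by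
        rw [norm_neg, norm_div, norm_one, norm_mul]
        simp
      calc ‖H u‖ = ‖Complex.exp (-b*(u:ℂ)^2)‖ * ((2*‖b‖)⁻¹ * u⁻¹) := by
            rw [hH]
            rw [norm_mul, norm_mul, hc, norm_inv, Complex.norm_real, Real.norm_eq_abs,
              abs_of_pos hupos, mul_assoc]
        _ ≤ 1 * ((2*‖b‖)⁻¹ * u⁻¹) :=
            mul_le_mul_of_nonneg_right (hexp_le u) (by positivity)
        _ = (2*‖b‖)⁻¹ * u⁻¹ := one_mul _
    · simpa using tendsto_inv_atTop_zero.const_mul ((2*‖b‖)⁻¹)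
  have key : ∫ u in Set.Ioi (1:ℝ), φ u = 0 - H 1 :=
    integral_Ioi_of_hasDerivAt_of_tendsto' hderiv (i1.add i2) htends
  rw [hφ] at key
  rw [integral_add i1 i2] at key
  have heq : ∫ u in Set.Ioi (1:ℝ), Complex.exp (-b * (u:ℂ)^2)
      = (0 - H 1) - ∫ u in Set.Ioi (1:ℝ), Complex.exp (-b*(u:ℂ)^2) / (2*b*(u:ℂ)^2) := by
    rw [← key]; ring
  rw [heq]
  have n1 : ‖0 - H 1‖ ≤ (2*‖b‖)⁻¹ := by
    rw [zero_sub, norm_neg, hH]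
    simp only [norm_mul, Complex.ofReal_one, inv_one, norm_one, mul_one]
    calc ‖Complex.exp (-b*((1:ℝ):ℂ)^2)‖ * ‖-(1/(2*b))‖ ≤ 1 * ‖-(1/(2*b))‖ := by
          gcongr; exact hexp_le 1
      _ = (2*‖b‖)⁻¹ := by
          rw [one_mul, norm_neg, norm_div, norm_one, norm_mul]
          simp
  have n2 : ‖∫ u in Set.Ioi (1:ℝ), Complex.exp (-b*(u:ℂ)^2) / (2*b*(u:ℂ)^2)‖ ≤ (2*‖b‖)⁻¹ := by
    have := norm_integral_le_of_norm_le hgint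
      (by filter_upwards [ae_restrict_mem measurableSet_Ioi] with u hu using hbound u hu)
    apply this.trans
    rw [MeasureTheory.integral_const_mul, integral_Ioi_rpow_of_lt (by norm_num) one_pos]
    norm_num
  calc ‖(0 - H 1) - _‖ ≤ ‖0 - H 1‖ + ‖_‖ := norm_sub_le _ _
    _ ≤ (2*‖b‖)⁻¹ + (2*‖b‖)⁻¹ := add_le_add n1 n2
    _ = 1 / ‖b‖ := by field_simp; ring

lemma interval_est {b : ℂ} (hb : 0 < b.re) :
    ‖(∫ u in (0:ℝ)..1, Complex.exp (-b * (u:ℂ)^2))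
       - ((π:ℂ)/b) ^ (1/2 : ℂ) / 2‖ ≤ 1 / ‖b‖ := by
  have hint := (integrable_cexp_neg_mul_sq hb)
  have hsplit : (∫ u in Set.Ioi (0:ℝ), Complex.exp (-b * (u:ℂ)^2))
      = (∫ u in Set.Ioc (0:ℝ) 1, Complex.exp (-b * (u:ℂ)^2))
        + ∫ u in Set.Ioi (1:ℝ), Complex.exp (-b * (u:ℂ)^2) := by
    rw [← Set.Ioc_union_Ioi_eq_Ioi (zero_le_one : (0:ℝ) ≤ 1)]
    exact setIntegral_union (Set.Ioc_disjoint_Ioi le_rfl) measurableSet_Ioi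
      hint.integrableOn hint.integrableOn
  have hIoc : (∫ u in (0:ℝ)..1, Complex.exp (-b * (u:ℂ)^2))
      = ∫ u in Set.Ioc (0:ℝ) 1, Complex.exp (-b * (u:ℂ)^2) :=
    intervalIntegral.integral_of_le zero_le_one
  have hgauss := integral_gaussian_complex_Ioi hb
  have : (∫ u in (0:ℝ)..1, Complex.exp (-b * (u:ℂ)^2)) - ((π:ℂ)/b) ^ (1/2 : ℂ) / 2
      = -(∫ u in Set.Ioi (1:ℝ), Complex.exp (-b * (u:ℂ)^2)) := by
    rw [hIoc, ← hgauss, hsplit]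
    ring
  rw [this, norm_neg]
  exact tail_bound hb

lemma sqrt_val {α : ℝ} (hα : 0 < α) :
    ((π:ℂ)/(2*(π:ℂ)*Complex.I*(α:ℂ))) ^ (1/2 : ℂ)
      = (1 - Complex.I)/2 * ((α ^ (-(1/2):ℝ) : ℝ) : ℂ) := by
  set w : ℂ := (1 - Complex.I)/2 * ((α ^ (-(1/2):ℝ) : ℝ) : ℂ) with hw
  have hα0 : (α:ℂ) ≠ 0 := Complex.ofReal_ne_zero.mpr hα.ne'
  have hπ0 : ((π:ℂ)) ≠ 0 := Complex.ofReal_ne_zero.mpr Real.pi_ne_zero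
  have hr2 : ((α ^ (-(1/2):ℝ) : ℝ) : ℂ)^2 = ((α⁻¹ : ℝ) : ℂ) := by
    rw [← Complex.ofReal_pow]
    congr 1
    rw [← Real.rpow_natCast (α ^ (-(1/2):ℝ)) 2, ← Real.rpow_mul hα.le]
    norm_num [Real.rpow_neg_one]
  have hw2 : w ^ (2:ℕ) = (π:ℂ)/(2*(π:ℂ)*Complex.I*(α:ℂ)) := by
    rw [hw]
    rw [mul_pow, div_pow, hr2]
    have : ((1:ℂ) - Complex.I)^2 = -2*Complex.I := by
      ring_nf
      rw [Complex.I_sq]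
      ring
    rw [this]
    rw [Complex.ofReal_inv]
    field_simp
    ring_nf
    rw [Complex.I_sq]
    ring
  have hre : 0 < w.re := by
    rw [hw, mul_comm, Complex.re_ofReal_mul]
    have h1 : ((1 - Complex.I)/2).re = 1/2 := by
      norm_num [Complex.div_re]
    rw [h1]
    have := Real.rpow_pos_of_pos hα (-(1/2):ℝ)
    positivity
  calc ((π:ℂ)/(2*(π:ℂ)*Complex.I*(α:ℂ))) ^ (1/2 : ℂ)
      = (w ^ (2:ℕ)) ^ ((2:ℂ)⁻¹) := by rw [hw2]; norm_num
    _ = w := Complex.sq_cpow_two_inv hre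

lemma E_est {α : ℝ} (hα : 1 ≤ α) :
    ‖(∫ u in (0:ℝ)..1, Complex.exp (-(2*(π:ℂ)*Complex.I*(α:ℂ)) * (u:ℂ)^2))
      - (1 - Complex.I)/4 * ((α ^ (-(1/2):ℝ) : ℝ) : ℂ)‖ ≤ 1/(2*π*α) := by
  have hα0 : (0:ℝ) < α := lt_of_lt_of_le one_pos hα
  set c : ℂ := 2*(π:ℂ)*Complex.I*(α:ℂ) with hc
  set T : ℂ := (1 - Complex.I)/4 * ((α ^ (-(1/2):ℝ) : ℝ) : ℂ) with hT
  set E : ℂ := ∫ u in (0:ℝ)..1, Complex.exp (-c * (u:ℂ)^2) with hE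
  have hcre : c.re = 0 := by simp [hc, Complex.mul_re, Complex.mul_im]
  have hcim : c.im = 2*π*α := by simp [hc, Complex.mul_re, Complex.mul_im]
  have hpa : (0:ℝ) < 2*π*α := by positivity
  -- the sqrt at ε = 0 equals 2*T
  have hzero : ((π:ℂ)/c) ^ (1/2 : ℂ) / 2 - T = 0 := by
    rw [hc, sqrt_val hα0, hT]
    ring
  -- pointwise bound for every positive ε
  have key : ∀ ε : ℝ, ε ∈ Set.Ioi (0:ℝ) →
      ‖E - T‖ ≤ ε + 1/(2*π*α) + ‖((π:ℂ)/((ε:ℂ) + c)) ^ (1/2 : ℂ) / 2 - T‖ := by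
    intro ε hε
    have hε0 : (0:ℝ) < ε := hε
    set b : ℂ := (ε:ℂ) + c with hb
    have hbre : 0 < b.re := by simp [hb, hcre, hε0]
    have hbim : b.im = 2*π*α := by simp [hb, hcim]
    have hbnorm : 2*π*α ≤ ‖b‖ := by
      calc 2*π*α = |b.im| := by rw [hbim]; exact (abs_of_pos hpa).symm
        _ ≤ ‖b‖ := Complex.abs_im_le_norm b
        _ = ‖b‖ := rfl
    set Eb : ℂ := ∫ u in (0:ℝ)..1, Complex.exp (-b * (u:ℂ)^2) with hEb
    have h2 : ‖Eb - ((π:ℂ)/b) ^ (1/2 : ℂ) / 2‖ ≤ 1/(2*π*α) := by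
      refine (interval_est hbre).trans ?_
      apply one_div_le_one_div_of_le hpa hbnorm
    have h1 : ‖E - Eb‖ ≤ ε := by
      have c1 : Continuous fun u : ℝ => Complex.exp (-c * (u:ℂ)^2) := by
        apply Complex.continuous_exp.comp; continuity
      have c2 : Continuous fun u : ℝ => Complex.exp (-b * (u:ℂ)^2) := by
        apply Complex.continuous_exp.comp; continuity
      have hsub : E - Eb = ∫ u in (0:ℝ)..1,
          (Complex.exp (-c * (u:ℂ)^2) - Complex.exp (-b * (u:ℂ)^2)) := by
        rw [hE, hEb, intervalIntegral.integral_sub (c1.intervalIntegrable 0 1)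
          (c2.intervalIntegrable 0 1)]
      rw [hsub]
      have hbd : ∀ x ∈ Set.uIoc (0:ℝ) 1,
          ‖Complex.exp (-c * (x:ℂ)^2) - Complex.exp (-b * (x:ℂ)^2)‖ ≤ ε := by
        intro x hx
        rw [Set.uIoc_of_le zero_le_one] at hx
        obtain ⟨hx0, hx1⟩ := hx
        have hfac : Complex.exp (-b * (x:ℂ)^2)
            = Complex.exp (-c * (x:ℂ)^2) * Complex.exp (((-(ε * x^2) : ℝ) : ℂ)) := by
          rw [← Complex.exp_add]
          congr 1
          push_cast
          rw [hb]
          ring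
        rw [hfac]
        have hnorm1 : ‖Complex.exp (-c * (x:ℂ)^2)‖ = 1 := by
          rw [Complex.norm_exp]
          have : (-c * (x:ℂ)^2).re = 0 := by
            have hxx : ((x:ℂ))^2 = ((x^2 : ℝ) : ℂ) := by push_cast; ring
            rw [hxx, Complex.mul_re]
            simp [hcre]
            exact Or.inr (by simp [pow_two, Complex.mul_im])
          rw [this, Real.exp_zero]
        calc ‖Complex.exp (-c * (x:ℂ)^2) - Complex.exp (-c * (x:ℂ)^2)
                * Complex.exp (((-(ε * x^2) : ℝ) : ℂ))‖
            = ‖Complex.exp (-c * (x:ℂ)^2)‖ * ‖1 - Complex.exp (((-(ε * x^2) : ℝ) : ℂ))‖ := by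
              rw [← norm_mul]; congr 1; ring
          _ = ‖(1 : ℂ) - Complex.exp (((-(ε * x^2) : ℝ) : ℂ))‖ := by rw [hnorm1, one_mul]
          _ = |1 - Real.exp (-(ε * x^2))| := by
              rw [← Complex.ofReal_exp, ← Complex.ofReal_one, ← Complex.ofReal_sub,
                Complex.norm_real, Real.norm_eq_abs]
          _ ≤ ε := by
              have he1 : Real.exp (-(ε * x^2)) ≤ 1 := by
                apply Real.exp_le_one_iff.mpr
                nlinarith
              have he2 : 1 - ε * x^2 ≤ Real.exp (-(ε * x^2)) := by
                have := Real.add_one_le_exp (-(ε * x^2))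
                linarith
              rw [_root_.abs_of_nonneg (by linarith)]
              have hx2 : x^2 ≤ 1 := by nlinarith
              have : ε * x^2 ≤ ε * 1 := mul_le_mul_of_nonneg_left hx2 hε0.le
              linarith
      calc ‖∫ u in (0:ℝ)..1, (Complex.exp (-c * (u:ℂ)^2) - Complex.exp (-b * (u:ℂ)^2))‖
          ≤ ε * |1 - 0| := intervalIntegral.norm_integral_le_of_norm_le_const hbd
        _ = ε := by simp
    calc ‖E - T‖ ≤ ‖E - Eb‖ + ‖Eb - ((π:ℂ)/b) ^ (1/2 : ℂ) / 2‖
          + ‖((π:ℂ)/b) ^ (1/2 : ℂ) / 2 - T‖ := by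
          have : E - T = (E - Eb) + (Eb - ((π:ℂ)/b) ^ (1/2 : ℂ) / 2)
              + (((π:ℂ)/b) ^ (1/2 : ℂ) / 2 - T) := by ring
          rw [this]
          exact norm_add₃_le
      _ ≤ ε + 1/(2*π*α) + ‖((π:ℂ)/((ε:ℂ) + c)) ^ (1/2 : ℂ) / 2 - T‖ := by
          gcongr
  -- now take the limit ε → 0⁺
  have hc0 : ((0:ℝ):ℂ) + c ≠ 0 := by
    intro h
    have : c.im = 0 := by rw [show c = -((0:ℝ):ℂ) by linear_combination h]; simp
    rw [hcim] at this
    linarith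
  have hinner : ContinuousAt (fun ε : ℝ => (π:ℂ)/((ε:ℂ) + c)) 0 :=
    ContinuousAt.div continuousAt_const
      ((Complex.continuous_ofReal.continuousAt).add continuousAt_const) hc0
  have hslit : (π:ℂ)/(((0:ℝ):ℂ) + c) ∈ Complex.slitPlane := by
    apply Complex.mem_slitPlane_iff.mpr
    right
    have : ((π:ℂ)/(((0:ℝ):ℂ) + c)).im = -(1/(2*α)) := by
      rw [Complex.ofReal_zero, zero_add, hc]
      rw [Complex.div_im]
      simp [Complex.mul_re, Complex.mul_im, Complex.normSq_apply]
      field_simp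
    rw [this]
    intro h
    have : (0:ℝ) < 1/(2*α) := by positivity
    linarith [neg_eq_zero.mp h]
  have houter : ContinuousAt (fun z : ℂ => z ^ (1/2 : ℂ)) ((π:ℂ)/(((0:ℝ):ℂ) + c)) :=
    continuousAt_cpow_const hslit
  have hcomp : ContinuousAt (fun ε : ℝ => ((π:ℂ)/((ε:ℂ) + c)) ^ (1/2 : ℂ)) 0 :=
    Filter.Tendsto.comp houter hinner
  have hcontf : ContinuousAt (fun ε : ℝ =>
      ‖((π:ℂ)/((ε:ℂ) + c)) ^ (1/2 : ℂ) / 2 - T‖) 0 :=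
    ((hcomp.div_const 2).sub continuousAt_const).norm
  have hlim : Tendsto (fun ε : ℝ => ε + 1/(2*π*α)
      + ‖((π:ℂ)/((ε:ℂ) + c)) ^ (1/2 : ℂ) / 2 - T‖) (𝓝[>] (0:ℝ)) (𝓝 (1/(2*π*α))) := by
    have l1 : Tendsto (fun ε : ℝ => ε) (𝓝[>] (0:ℝ)) (𝓝 0) :=
      (continuous_id.tendsto 0).mono_left nhdsWithin_le_nhds
    have l3 : Tendsto (fun ε : ℝ => ‖((π:ℂ)/((ε:ℂ) + c)) ^ (1/2 : ℂ) / 2 - T‖)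
        (𝓝[>] (0:ℝ)) (𝓝 0) := by
      have := hcontf.tendsto.mono_left (nhdsWithin_le_nhds (s := Set.Ioi (0:ℝ)))
      have hval : ‖((π:ℂ)/(((0:ℝ):ℂ) + c)) ^ (1/2 : ℂ) / 2 - T‖ = 0 := by
        rw [Complex.ofReal_zero, zero_add, hzero, norm_zero]
      rwa [hval] at this
    have hsum : Tendsto (fun ε : ℝ => (ε + 1/(2*π*α))
        + ‖((π:ℂ)/((ε:ℂ) + c)) ^ (1/2 : ℂ) / 2 - T‖) (𝓝[>] (0:ℝ))
        (𝓝 ((0 + 1/(2*π*α)) + 0)) :=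
      (l1.add (tendsto_const_nhds (x := 1/(2*π*α)))).add l3
    simpa using hsum
  exact ge_of_tendsto hlim (eventually_nhdsWithin_of_forall key)

theorem fresnel_asymptotic :
    ∃ C : ℝ, 0 < C ∧ ∀ α : ℝ, 1 ≤ α →
      ‖(∫ θ in (0:ℝ)..(π/2),
            Complex.exp (2 * π * Complex.I * α * (Real.sin θ)^2) * (Real.sin θ)) -
          ((1 - Complex.I)/4) * Complex.exp (2 * π * Complex.I * α) *
            ((α ^ (-(1/2 : ℝ)) : ℝ) : ℂ)‖ ≤ C / α := by
  refine ⟨1, one_pos, fun α hα => ?_⟩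
  have hα0 : (0:ℝ) < α := lt_of_lt_of_le one_pos hα
  set c : ℂ := 2*(π:ℝ)*Complex.I*(α:ℂ) with hc
  have hcre : c.re = 0 := by simp [hc, Complex.mul_re, Complex.mul_im]
  -- substitution u = cos θ
  have hg : Continuous fun u : ℝ => Complex.exp (c*(1-(u:ℂ)^2)) := by
    apply Complex.continuous_exp.comp; continuity
  have hsub := intervalIntegral.integral_comp_smul_deriv
    (f := Real.cos) (f' := fun θ => -Real.sin θ) (a := 0) (b := π/2)
    (fun x _ => Real.hasDerivAt_cos x) (Real.continuous_sin.neg).continuousOn hg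
  rw [Real.cos_zero, Real.cos_pi_div_two] at hsub
  have hpoint : ∀ θ : ℝ,
      Complex.exp (2 * (π:ℝ) * Complex.I * (α:ℂ) * ((Real.sin θ : ℂ))^2) * ((Real.sin θ : ℂ))
        = -((-Real.sin θ) • Complex.exp (c*(1-((Real.cos θ : ℂ))^2))) := by
    intro θ
    have hs : (Real.sin θ)^2 = 1 - (Real.cos θ)^2 := by
      nlinarith [Real.sin_sq_add_cos_sq θ]
    have h2 : ((Real.sin θ : ℂ))^2 = 1 - ((Real.cos θ : ℂ))^2 := by
      rw [← Complex.ofReal_pow, hs]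
      push_cast
      ring
    rw [h2, neg_smul, neg_neg, Complex.real_smul, hc]
    ring
  have hI : (∫ θ in (0:ℝ)..(π/2),
        Complex.exp (2 * (π:ℝ) * Complex.I * (α:ℂ) * ((Real.sin θ : ℂ))^2) * ((Real.sin θ : ℂ)))
      = ∫ u in (0:ℝ)..1, Complex.exp (c*(1-(u:ℂ)^2)) := by
    rw [intervalIntegral.integral_congr (g := fun θ : ℝ =>
        -((-Real.sin θ) • Complex.exp (c*(1-((Real.cos θ : ℂ))^2)))) (fun θ _ => hpoint θ)]
    rw [intervalIntegral.integral_neg]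
    have : (∫ θ in (0:ℝ)..(π/2), (-Real.sin θ) • Complex.exp (c*(1-((Real.cos θ : ℂ))^2)))
        = ∫ u in (1:ℝ)..0, Complex.exp (c*(1-(u:ℂ)^2)) := hsub
    rw [this, intervalIntegral.integral_symm]
    simp
  have hfac : (∫ u in (0:ℝ)..1, Complex.exp (c*(1-(u:ℂ)^2)))
      = Complex.exp c * ∫ u in (0:ℝ)..1, Complex.exp (-c*(u:ℂ)^2) := by
    rw [← intervalIntegral.integral_const_mul]
    apply intervalIntegral.integral_congr
    intro u _
    show Complex.exp (c*(1-(u:ℂ)^2)) = Complex.exp c * Complex.exp (-c*(u:ℂ)^2)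
    rw [← Complex.exp_add]
    congr 1
    ring
  have hnorm1 : ‖Complex.exp c‖ = 1 := by
    rw [Complex.norm_exp, hcre, Real.exp_zero]
  have hEe := E_est hα
  calc ‖(∫ θ in (0:ℝ)..(π/2),
          Complex.exp (2 * (π:ℝ) * Complex.I * (α:ℂ) * ((Real.sin θ : ℂ))^2) * ((Real.sin θ : ℂ)))
        - ((1 - Complex.I)/4) * Complex.exp (2 * (π:ℝ) * Complex.I * (α:ℂ)) *
          ((α ^ (-(1/2 : ℝ)) : ℝ) : ℂ)‖
      = ‖Complex.exp c * ((∫ u in (0:ℝ)..1, Complex.exp (-c*(u:ℂ)^2))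
          - (1 - Complex.I)/4 * ((α ^ (-(1/2):ℝ) : ℝ) : ℂ))‖ := by
        rw [hI, hfac]
        congr 1
        rw [hc]
        ring
    _ = ‖(∫ u in (0:ℝ)..1, Complex.exp (-c*(u:ℂ)^2))
          - (1 - Complex.I)/4 * ((α ^ (-(1/2):ℝ) : ℝ) : ℂ)‖ := by
        rw [norm_mul, hnorm1, one_mul]
    _ ≤ 1/(2*π*α) := hEe
    _ ≤ 1/α := by
        apply one_div_le_one_div_of_le hα0
        nlinarith [Real.pi_gt_three]
    _ = 1/α := rfl
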